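/- (Main Theorem) Let (X,d) be a metric space, let P ⊆ X be a nonempty finite set, let k ≥ 1 with k ≤ |P|, let δ > 0, let Q ⊆ P be a δ-cover of P with |Q| ≥ k, and let C be a valid farthest-first output on Q with k centers. Then cost(C,P) ≤ 2·OPT(P,k) + δ. -/

import Mathlib

/-- `setDist s C` is the distance from the point `s` to the set `C`,
i.e. the infimum (for nonempty finite `C`, the minimum) of `dist s c` over `c ∈ C`. -/
noncomputable def setDist {X : Type*} [MetricSpace X] (s : X) (C : Set X) : ℝ :=
  sInf ((fun c => dist s c) '' C)

/-- `cost C S` is the supremum (for nonempty finite `S`, the maximum) over `s ∈ S`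
of the distance from `s` to the center set `C`. -/
noncomputable def cost {X : Type*} [MetricSpace X] (C S : Set X) : ℝ :=
  sSup ((fun s => setDist s C) '' S)

/-- `kOPT P k` is the optimal `k`-center cost on the finite set `P`. -/
noncomputable def kOPT {X : Type*} [MetricSpace X] (P : Finset X) (k : ℕ) : ℝ :=
  sInf { r : ℝ | ∃ C : Finset X, C ⊆ P ∧ C.card = k ∧ cost (C : Set X) (P : Set X) = r }

/-- `IsFF S k C` : `C` is a valid farthest-first output on `S` with `k` centers. -/
def IsFF {X : Type*} [MetricSpace X] (S : Finset X) (k : ℕ) (C : Finset X) : Prop :=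
  ∃ c : Fin k → X, Function.Injective c ∧ (∀ i, c i ∈ S) ∧
    (↑C : Set X) = Set.range c ∧
    ∀ i : Fin k, 0 < (i : ℕ) → ∀ s ∈ S,
      setDist s (c '' {j | j < i}) ≤ setDist (c i) (c '' {j | j < i})

section Helpers

variable {X : Type*} [MetricSpace X]

lemma bddBelow_dists (s : X) (C : Set X) : BddBelow ((fun c => dist s c) '' C) :=
  ⟨0, by rintro x ⟨c, _, rfl⟩; exact dist_nonneg⟩

lemma setDist_nonneg' (s : X) (C : Set X) : 0 ≤ setDist s C :=
  Real.sInf_nonneg (by rintro x ⟨c, _, rfl⟩; exact dist_nonneg)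

lemma setDist_le (s : X) {C : Set X} {c : X} (hc : c ∈ C) : setDist s C ≤ dist s c :=
  csInf_le (bddBelow_dists s C) ⟨c, hc, rfl⟩

lemma exists_setDist_eq (s : X) {C : Set X} (hfin : C.Finite) (hne : C.Nonempty) :
    ∃ c ∈ C, setDist s C = dist s c := by
  have h := (hne.image (fun c => dist s c)).csInf_mem (hfin.image _)
  obtain ⟨c, hc, hcd⟩ := h
  exact ⟨c, hc, hcd.symm⟩

lemma setDist_anti (s : X) {C₁ C₂ : Set X} (h : C₁ ⊆ C₂) (hne : C₁.Nonempty) :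
    setDist s C₂ ≤ setDist s C₁ :=
  csInf_le_csInf (bddBelow_dists s C₂) (hne.image _) (Set.image_mono h)

lemma setDist_triangle' (p q : X) {C : Set X} (hfin : C.Finite) (hne : C.Nonempty) :
    setDist p C ≤ dist p q + setDist q C := by
  obtain ⟨c, hc, hcd⟩ := exists_setDist_eq q hfin hne
  calc setDist p C ≤ dist p c := setDist_le p hc
    _ ≤ dist p q + dist q c := dist_triangle p q c
    _ = dist p q + setDist q C := by rw [hcd]

lemma cost_le {C S : Set X} {M : ℝ} (hM : 0 ≤ M) (h : ∀ s ∈ S, setDist s C ≤ M) :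
    cost C S ≤ M :=
  Real.sSup_le (by rintro x ⟨s, hs, rfl⟩; exact h s hs) hM

lemma le_cost {C S : Set X} (hfin : S.Finite) {s : X} (hs : s ∈ S) :
    setDist s C ≤ cost C S :=
  le_csSup ((hfin.image _).bddAbove) ⟨s, hs, rfl⟩

lemma exists_cost_eq (C : Set X) {S : Set X} (hfin : S.Finite) (hne : S.Nonempty) :
    ∃ s ∈ S, cost C S = setDist s C := by
  have h := (hne.image (fun s => setDist s C)).csSup_mem (hfin.image _)
  obtain ⟨s, hs, hsd⟩ := h
  exact ⟨s, hs, hsd.symm⟩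

lemma cost_nonneg (C S : Set X) : 0 ≤ cost C S :=
  Real.sSup_nonneg (by rintro x ⟨s, _, rfl⟩; exact setDist_nonneg' s C)

lemma kOPT_spec (P : Finset X) (k : ℕ) (hk : k ≤ P.card) :
    ∃ C : Finset X, C ⊆ P ∧ C.card = k ∧ cost (C : Set X) (P : Set X) = kOPT P k ∧
      ∀ C' : Finset X, C' ⊆ P → C'.card = k →
        kOPT P k ≤ cost (C' : Set X) (P : Set X) := by
  set A := { r : ℝ | ∃ C : Finset X, C ⊆ P ∧ C.card = k ∧ cost (C : Set X) (P : Set X) = r }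
    with hA
  have hfin : A.Finite := by
    have : A ⊆ (fun C : Finset X => cost (C : Set X) (P : Set X)) '' (P.powerset : Set (Finset X)) := by
      rintro r ⟨C, hCP, _, rfl⟩
      exact ⟨C, by simpa using hCP, rfl⟩
    exact Set.Finite.subset ((P.powerset : Set (Finset X)).toFinite.image _) this
  have hne : A.Nonempty := by
    obtain ⟨C, hCP, hcard⟩ := Finset.exists_subset_card_eq hk
    exact ⟨_, C, hCP, hcard, rfl⟩
  have hmem : kOPT P k ∈ A := hne.csInf_mem hfin
  obtain ⟨C, hCP, hcard, hcost⟩ := hmem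
  refine ⟨C, hCP, hcard, hcost, fun C' hC'P hC'card => ?_⟩
  exact csInf_le hfin.bddBelow ⟨C', hC'P, hC'card, rfl⟩

end Helpers

/-- Main theorem: if `Q ⊆ P` is a `δ`-cover of `P` with `|Q| ≥ k` and `C` is a
valid farthest-first output on `Q` with `k` centers, then
`cost(C,P) ≤ 2·OPT(P,k) + δ`. -/
theorem stmt_12 {X : Type*} [MetricSpace X] (P : Finset X) (hP : P.Nonempty)
    (k : ℕ) (hk : 1 ≤ k) (hkP : k ≤ P.card)
    (δ : ℝ) (hδ : 0 < δ)
    (Q : Finset X) (hQP : Q ⊆ P)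
    (hcover : ∀ p ∈ P, ∃ q ∈ Q, dist p q ≤ δ)
    (hkQ : k ≤ Q.card)
    (C : Finset X) (hC : IsFF Q k C) :
    cost (C : Set X) (P : Set X) ≤ 2 * kOPT P k + δ := by
  obtain ⟨c, hcinj, hcQ, hCrange, hFF⟩ := hC
  have hkpos : 0 < k := hk
  have hCne : (C : Set X).Nonempty := by
    rw [hCrange]; exact ⟨c ⟨0, hkpos⟩, Set.mem_range_self _⟩
  have hCfin : (C : Set X).Finite := C.finite_toSet
  have hQne : (Q : Set X).Nonempty := by
    have : 0 < Q.card := lt_of_lt_of_le hkpos hkQ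
    obtain ⟨q, hq⟩ := Finset.card_pos.mp this
    exact ⟨q, hq⟩
  -- r = cost of FF output on Q, attained at qstar
  set r := cost (C : Set X) (Q : Set X) with hr
  obtain ⟨qs, hqsQ, hqs⟩ := exists_cost_eq (C : Set X) Q.finite_toSet hQne
  have hrnn : 0 ≤ r := cost_nonneg _ _
  -- optimal solution
  obtain ⟨Copt, hCoptP, hCoptcard, hCoptcost, _⟩ := kOPT_spec P k hkP
  have hOPTnn : 0 ≤ kOPT P k := hCoptcost ▸ cost_nonneg _ _
  have hCoptne : (Copt : Set X).Nonempty := by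
    have : 0 < Copt.card := hCoptcard ▸ hkpos
    obtain ⟨x, hx⟩ := Finset.card_pos.mp this
    exact ⟨x, hx⟩
  -- r ≤ dist qs (c i)
  have keyq : ∀ i : Fin k, r ≤ dist qs (c i) := by
    intro i
    rw [hr, hqs]
    exact setDist_le qs (by rw [hCrange]; exact Set.mem_range_self _)
  -- r ≤ dist (c i) (c j) for i < j
  have keylt : ∀ i j : Fin k, i < j → r ≤ dist (c i) (c j) := by
    intro i j hij
    set S := c '' {l : Fin k | l < j} with hS
    have hSsub : S ⊆ (C : Set X) := by
      rw [hCrange]; rintro x ⟨l, _, rfl⟩; exact Set.mem_range_self _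
    have hSne : S.Nonempty := ⟨c i, i, hij, rfl⟩
    have hjpos : 0 < (j : ℕ) := lt_of_le_of_lt (Nat.zero_le _) hij
    calc r = setDist qs (C : Set X) := hqs ▸ rfl
      _ ≤ setDist qs S := setDist_anti qs hSsub hSne
      _ ≤ setDist (c j) S := hFF j hjpos qs hqsQ
      _ ≤ dist (c j) (c i) := setDist_le (c j) ⟨i, hij, rfl⟩
      _ = dist (c i) (c j) := dist_comm _ _
  have key : ∀ i j : Fin k, i ≠ j → r ≤ dist (c i) (c j) := by
    intro i j hij
    rcases lt_or_gt_of_ne hij with h | h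
    · exact keylt i j h
    · exact (dist_comm (c j) (c i)) ▸ keylt j i h
  -- cost C P ≤ r + δ
  have hstep : cost (C : Set X) (P : Set X) ≤ r + δ := by
    apply cost_le (by linarith)
    intro p hp
    obtain ⟨q, hqQ, hpq⟩ := hcover p hp
    have h1 : setDist p (C : Set X) ≤ dist p q + setDist q (C : Set X) :=
      setDist_triangle' p q hCfin hCne
    have h2 : setDist q (C : Set X) ≤ r := le_cost Q.finite_toSet hqQ
    linarith
  -- main claim : r ≤ 2 * kOPT P k
  have hmain : r ≤ 2 * kOPT P k := by
    by_cases hqsC : qs ∈ (C : Set X)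
    · have : r ≤ 0 := by
        rw [hr, hqs]
        calc setDist qs (C : Set X) ≤ dist qs qs := setDist_le qs hqsC
          _ = 0 := dist_self qs
      linarith
    · -- k+1 points pairwise at distance ≥ r
      set f : Fin (k + 1) → X := fun i =>
        if h : (i : ℕ) < k then c ⟨i, h⟩ else qs with hf
      have hfP : ∀ i, f i ∈ P := by
        intro i
        rw [hf]
        dsimp only
        split
        · exact hQP (hcQ _)
        · exact hQP hqsQ
      have hpair : ∀ i j : Fin (k + 1), i ≠ j → r ≤ dist (f i) (f j) := by
        intro i j hij
        rw [hf]
        dsimp only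
        split <;> split
        · rename_i hi hj
          apply key
          intro hcc
          have hvv : (i : ℕ) = (j : ℕ) := Fin.mk.inj hcc
          exact hij (Fin.ext hvv)
        · rename_i hi hj
          rw [dist_comm]; exact keyq _
        · exact keyq _
        · rename_i hi hj
          exfalso
          apply hij
          have hik : (i : ℕ) = k := Nat.le_antisymm (Nat.lt_succ_iff.mp i.isLt) (le_of_not_gt hi)
          have hjk : (j : ℕ) = k := Nat.le_antisymm (Nat.lt_succ_iff.mp j.isLt) (le_of_not_gt hj)
          exact Fin.ext (hik.trans hjk.symm)
      -- nearest centers in Copt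
      have hnear : ∀ i : Fin (k + 1), ∃ x ∈ Copt, dist (f i) x ≤ kOPT P k := by
        intro i
        obtain ⟨x, hx, hxd⟩ := exists_setDist_eq (f i) Copt.finite_toSet hCoptne
        refine ⟨x, hx, ?_⟩
        rw [← hxd, ← hCoptcost]
        exact le_cost P.finite_toSet (by exact_mod_cast hfP i)
      choose g hgmem hgd using hnear
      -- pigeonhole
      have : ∃ i ∈ (Finset.univ : Finset (Fin (k + 1))), ∃ j ∈ Finset.univ, i ≠ j ∧ g i = g j := by
        apply Finset.exists_ne_map_eq_of_card_lt_of_maps_to (t := Copt)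
        · simp [hCoptcard]
        · intro i _; exact hgmem i
      obtain ⟨i, _, j, _, hij, hgij⟩ := this
      calc r ≤ dist (f i) (f j) := hpair i j hij
        _ ≤ dist (f i) (g i) + dist (g i) (f j) := dist_triangle _ _ _
        _ = dist (f i) (g i) + dist (f j) (g j) := by rw [hgij, dist_comm (g j) (f j)]
        _ ≤ kOPT P k + kOPT P k := add_le_add (hgd i) (hgd j)
        _ = 2 * kOPT P k := by ring
  linarith
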